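/- In the Clifford algebra of a quadratic form Q on a K-vector space V (char K = 0), for any vectors v₁, …, vₙ ∈ V and any i, one has ι(vᵢ)·Sₙ(ι(v₁),…,ι(vₙ)) = (−1)^{n−1}·Sₙ(ι(v₁),…,ι(vₙ))·ι(vᵢ), where Sₙ is the standard polynomial. -/

import Mathlib

/-- The standard polynomial `Sₙ` evaluated at `v₁, …, vₙ`. -/
def stdPoly {A : Type*} [Ring A] (n : ℕ) (v : Fin n → A) : A :=
  ∑ σ : Equiv.Perm (Fin n),
    ((Equiv.Perm.sign σ : ℤ) • (List.ofFn fun i => v (σ i)).prod)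

namespace Stmt12Aux

open Equiv Equiv.Perm CliffordAlgebra

set_option linter.unusedSectionVars false
set_option maxHeartbeats 1000000

theorem ofFn_insertNth' {α : Type*} :
    ∀ {n : ℕ} (p : Fin (n + 1)) (a : α) (f : Fin n → α),
      List.ofFn (p.insertNth a f) = (List.ofFn f).insertIdx p a := by
  intro n
  induction n with
  | zero =>
    intro p a f
    have hp : p = 0 := Fin.fin_one_eq_zero p
    subst hp
    simp [Fin.insertNth_zero', List.ofFn_succ]
  | succ m ih =>
    intro p a f
    refine Fin.cases ?_ (fun q => ?_) p
    · simp [Fin.insertNth_zero', List.ofFn_succ]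
    · have h0 : (Fin.insertNth (α := fun _ => α) q.succ a f) 0 = f 0 := by
        rw [← Fin.succ_succAbove_zero q, Fin.insertNth_apply_succAbove]
      have htail : ∀ t : Fin (m + 1),
          (Fin.insertNth (α := fun _ => α) q.succ a f) t.succ
            = Fin.insertNth (α := fun _ => α) q a (fun s => f s.succ) t := by
        intro t
        refine q.succAboveCases ?_ (fun s => ?_) t
        · rw [Fin.insertNth_apply_same, Fin.insertNth_apply_same]
        · rw [← Fin.succ_succAbove_succ, Fin.insertNth_apply_succAbove,
            Fin.insertNth_apply_succAbove]
      rw [List.ofFn_succ, h0]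
      have : (List.ofFn fun t => (Fin.insertNth (α := fun _ => α) q.succ a f) t.succ)
          = List.ofFn (Fin.insertNth (α := fun _ => α) q a (fun s => f s.succ)) := by
        congr 1; funext t; exact htail t
      rw [this, ih, List.ofFn_succ (f := f), Fin.val_succ, List.insertIdx_succ_cons]

theorem eraseIdx_ofFn' {α : Type*} {m : ℕ} (f : Fin (m + 1) → α) (k : Fin (m + 1)) :
    (List.ofFn f).eraseIdx k = List.ofFn (fun t => f (k.succAbove t)) := by
  conv_lhs => rw [← Fin.insertNth_self_removeNth k f, ofFn_insertNth', List.eraseIdx_insertIdx_self]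
  rfl

section
variable {K V : Type*} [Field K] [CharZero K] [AddCommGroup V] [Module K V]
  (Q : QuadraticForm K V)

theorem keyV (w : V) :
    ∀ (l : List V) (k : ℕ) (hk : k < l.length),
      ((l.insertIdx k w).map (ι Q)).prod + ((l.insertIdx (k + 1) w).map (ι Q)).prod
        = QuadraticMap.polar Q w (l.get ⟨k, hk⟩) • ((l.eraseIdx k).map (ι Q)).prod := by
  intro l
  induction l with
  | nil => intro k hk; simp at hk
  | cons a t iht =>
    intro k hk
    cases k with
    | zero =>
      simp only [List.insertIdx_zero, List.insertIdx_succ_cons, List.map_cons, List.prod_cons,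
        List.eraseIdx_cons_zero, List.get]
      rw [← mul_assoc, ← mul_assoc, ← add_mul, ι_mul_ι_add_swap, Algebra.smul_def]
    | succ k =>
      have hk' : k < t.length := by simpa using hk
      simp only [List.insertIdx_succ_cons, List.map_cons, List.prod_cons,
        List.eraseIdx_cons_succ, List.get]
      rw [← mul_add, iht k hk', mul_smul_comm]

variable {n : ℕ} (v : Fin n → V) (i : Fin n)

noncomputable def Pm (m : ℕ) : CliffordAlgebra Q :=
  ∑ σ : Perm (Fin n), (Perm.sign σ : ℤ) •
    (((List.ofFn (v ∘ σ)).insertIdx m (v i)).map (ι Q)).prod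

noncomputable def Cm (k : Fin n) : CliffordAlgebra Q :=
  ∑ σ : Perm (Fin n), (Perm.sign σ : ℤ) •
    (QuadraticMap.polar Q (v i) (v (σ k)) • (((List.ofFn (v ∘ σ)).eraseIdx k).map (ι Q)).prod)

theorem Pm_zero :
    Pm Q v i 0 = ι Q (v i) * ∑ σ : Perm (Fin n),
      (Perm.sign σ : ℤ) • (List.ofFn fun t => ι Q (v (σ t))).prod := by
  rw [Pm, Finset.mul_sum]
  refine Finset.sum_congr rfl fun σ _ => ?_
  rw [List.insertIdx_zero, List.map_cons, List.prod_cons, mul_smul_comm, List.map_ofFn]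
  rfl

theorem Pm_last :
    Pm Q v i n = (∑ σ : Perm (Fin n),
      (Perm.sign σ : ℤ) • (List.ofFn fun t => ι Q (v (σ t))).prod) * ι Q (v i) := by
  rw [Pm, Finset.sum_mul]
  refine Finset.sum_congr rfl fun σ _ => ?_
  rw [smul_mul_assoc]
  congr 1
  have h2 : (List.ofFn (v ∘ σ)).insertIdx n (v i) = List.ofFn (v ∘ σ) ++ [v i] := by
    have := List.insertIdx_length_self (l := List.ofFn (v ∘ σ)) (x := v i)
    simpa using this
  rw [h2]
  rw [List.map_append, List.prod_append, List.map_ofFn]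
  simp
  rfl

theorem Pm_step (k : Fin n) :
    Pm Q v i k + Pm Q v i ((k : ℕ) + 1) = Cm Q v i k := by
  rw [Pm, Pm, Cm, ← Finset.sum_add_distrib]
  refine Finset.sum_congr rfl fun σ _ => ?_
  rw [← smul_add]
  congr 1
  have hk : (k : ℕ) < (List.ofFn (v ∘ σ)).length := by simp
  rw [keyV Q (v i) (List.ofFn (v ∘ σ)) k hk]
  congr 1
  simp [List.get_ofFn]

theorem decomp :
    stdPoly (n + 1) (Fin.cons (ι Q (v i)) fun j => ι Q (v j)) =
      ∑ m : Fin (n + 1), ((-1 : ℤ) ^ (m : ℕ)) • Pm Q v i m := by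
  classical
  set z : Fin (n + 1) → CliffordAlgebra Q := Fin.cons (ι Q (v i)) fun j => ι Q (v j) with hz
  have key : ∀ (m : Fin (n + 1)) (σ : Perm (Fin n)),
      (fun t => z ((Equiv.Perm.decomposeFin.symm (0, σ) * m.cycleRange) t))
        = Fin.insertNth (α := fun _ => CliffordAlgebra Q) m (ι Q (v i))
            (fun t => ι Q (v (σ t))) := by
    intro m σ
    funext t
    refine m.succAboveCases ?_ (fun s => ?_) t
    · rw [Perm.mul_apply, Fin.cycleRange_self, Equiv.Perm.decomposeFin_symm_apply_zero,
        Fin.insertNth_apply_same]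
      simp [hz]
    · rw [Perm.mul_apply, Fin.cycleRange_succAbove, Equiv.Perm.decomposeFin_symm_apply_succ,
        Fin.insertNth_apply_succAbove]
      simp [hz]
  have hsign : ∀ (m : Fin (n + 1)) (σ : Perm (Fin n)),
      ((Perm.sign (Equiv.Perm.decomposeFin.symm (0, σ) * m.cycleRange) : ℤ))
        = (-1) ^ (m : ℕ) * (Perm.sign σ : ℤ) := by
    intro m σ
    rw [Perm.sign_mul, Equiv.Perm.decomposeFin.symm_sign, if_pos rfl, one_mul,
      Fin.sign_cycleRange]
    push_cast
    ring
  have hbij : Function.Bijective (fun p : Fin (n + 1) × Perm (Fin n) =>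
      Equiv.Perm.decomposeFin.symm (0, p.2) * p.1.cycleRange) := by
    rw [Fintype.bijective_iff_injective_and_card]
    constructor
    · rintro ⟨m, σ⟩ ⟨m', σ'⟩ hEq
      simp only at hEq
      have h0 : ∀ (a : Fin (n + 1)) (τ : Perm (Fin n)),
          (Equiv.Perm.decomposeFin.symm (0, τ) * a.cycleRange)⁻¹ 0 = a := by
        intro a τ
        rw [mul_inv_rev, Perm.mul_apply]
        have hz0 : (Equiv.Perm.decomposeFin.symm (0, τ))⁻¹ 0 = 0 := by
          rw [Perm.inv_eq_iff_eq]
          exact (Equiv.Perm.decomposeFin_symm_apply_zero 0 τ).symm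
        rw [hz0]
        exact Fin.cycleRange_symm_zero a
      have hm : m = m' := by rw [← h0 m σ, hEq, h0 m' σ']
      subst hm
      have hσ : Equiv.Perm.decomposeFin.symm (0, σ) = Equiv.Perm.decomposeFin.symm (0, σ') :=
        mul_right_cancel hEq
      have := Equiv.injective Equiv.Perm.decomposeFin.symm hσ
      simp only [Prod.mk.injEq, true_and] at this
      simp [this]
    · simp [Fintype.card_prod, Fintype.card_perm, Fintype.card_fin, Nat.factorial_succ]
  have hre := Fintype.sum_bijective _ hbij
    (fun p : Fin (n + 1) × Perm (Fin n) =>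
      ((Perm.sign (Equiv.Perm.decomposeFin.symm (0, p.2) * p.1.cycleRange) : ℤ) •
        (List.ofFn fun t =>
          z ((Equiv.Perm.decomposeFin.symm (0, p.2) * p.1.cycleRange) t)).prod))
    (fun π => ((Perm.sign π : ℤ) • (List.ofFn fun t => z (π t)).prod))
    (fun p => rfl)
  rw [stdPoly, ← hre, Fintype.sum_prod_type]
  refine Finset.sum_congr rfl fun m _ => ?_
  rw [Pm, Finset.smul_sum]
  refine Finset.sum_congr rfl fun σ _ => ?_
  rw [hsign m σ, key m σ, mul_smul]
  congr 2
  have hcomp : Fin.insertNth (α := fun _ => CliffordAlgebra Q) m (ι Q (v i))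
      (fun t => ι Q (v (σ t))) = (fun w => ι Q w) ∘ (m.insertNth (v i) (v ∘ σ)) := by
    funext t
    refine m.succAboveCases ?_ (fun s => ?_) t
    · simp [Fin.insertNth_apply_same]
    · simp only [Function.comp_apply]
      rw [Fin.insertNth_apply_succAbove, Fin.insertNth_apply_succAbove]
      rfl
  rw [hcomp, ← List.map_ofFn, ofFn_insertNth']

theorem vanish :
    stdPoly (n + 1) (Fin.cons (ι Q (v i)) fun j => ι Q (v j)) = 0 := by
  classical
  set z : Fin (n + 1) → CliffordAlgebra Q := Fin.cons (ι Q (v i)) fun j => ι Q (v j) with hz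
  have hzswap : ∀ a : Fin (n + 1), z (Equiv.swap 0 i.succ a) = z a := by
    intro a
    rcases eq_or_ne a 0 with rfl | h0
    · rw [Equiv.swap_apply_left]; simp [hz]
    rcases eq_or_ne a i.succ with rfl | h1
    · rw [Equiv.swap_apply_right]; simp [hz]
    · rw [Equiv.swap_apply_of_ne_of_ne h0 h1]
  rw [stdPoly]
  apply Finset.sum_ninvolution (fun σ => Equiv.swap 0 i.succ * σ)
  · intro σ
    have hw : (List.ofFn fun t => z ((Equiv.swap 0 i.succ * σ) t))
        = List.ofFn fun t => z (σ t) := by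
      congr 1; funext t; rw [Perm.mul_apply, hzswap]
    have hsgn : ((Perm.sign (Equiv.swap 0 i.succ * σ) : ℤ)) = -(Perm.sign σ : ℤ) := by
      rw [Perm.sign_mul, Equiv.Perm.sign_swap (Fin.succ_ne_zero i).symm]
      push_cast; ring
    rw [hw, hsgn, ← add_smul]
    simp
  · intro σ _ hEq
    have hsw : Equiv.swap (0 : Fin (n + 1)) i.succ = 1 := by
      have h1 : Equiv.swap (0 : Fin (n + 1)) i.succ * σ = 1 * σ := by rw [one_mul]; exact hEq
      exact mul_right_cancel h1
    have h2 := congrArg (fun e : Perm (Fin (n + 1)) => e 0) hsw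
    simp only [Equiv.swap_apply_left, Perm.one_apply] at h2
    exact absurd h2 (Fin.succ_ne_zero i)
  · intro σ; exact Finset.mem_univ _
  · intro σ
    rw [← mul_assoc, Equiv.swap_mul_self, one_mul]

end

section
variable {K V : Type*} [Field K] [CharZero K] [AddCommGroup V] [Module K V]
  (Q : QuadraticForm K V) {m : ℕ} (v : Fin (m + 1) → V) (i : Fin (m + 1))

theorem Cm_alt (k : ℕ) (h : k + 1 < m + 1) :
    Cm Q v i ⟨k + 1, h⟩ = - Cm Q v i ⟨k, Nat.lt_of_succ_lt h⟩ := by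
  have hk : k < m + 1 := Nat.lt_of_succ_lt h
  set s : Perm (Fin (m + 1)) := Equiv.swap ⟨k, hk⟩ ⟨k + 1, h⟩ with hs
  have hne : (⟨k, hk⟩ : Fin (m + 1)) ≠ ⟨k + 1, h⟩ := by
    simp only [ne_eq, Fin.mk.injEq]; omega
  have hkey : ∀ (σ : Perm (Fin (m + 1))) (t : Fin m),
      (σ * s) ((⟨k + 1, h⟩ : Fin (m + 1)).succAbove t)
        = σ ((⟨k, hk⟩ : Fin (m + 1)).succAbove t) := by
    intro σ t
    rw [Perm.mul_apply]
    congr 1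
    rcases lt_trichotomy (t : ℕ) k with hlt | heq | hgt
    · rw [Fin.succAbove_of_castSucc_lt _ _ (by simp [Fin.lt_def]; omega),
        Fin.succAbove_of_castSucc_lt _ _ (by simp [Fin.lt_def]; omega), hs,
        Equiv.swap_apply_of_ne_of_ne]
      · simp only [ne_eq, Fin.ext_iff, Fin.coe_castSucc]; omega
      · simp only [ne_eq, Fin.ext_iff, Fin.coe_castSucc]; omega
    · rw [Fin.succAbove_of_castSucc_lt _ _ (by simp [Fin.lt_def]; omega),
        Fin.succAbove_of_le_castSucc _ _ (by simp [Fin.le_def]; omega)]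
      have h1 : t.castSucc = (⟨k, hk⟩ : Fin (m + 1)) := by
        simp [Fin.ext_iff]; omega
      rw [h1, hs, Equiv.swap_apply_left]
      simp [Fin.ext_iff]; omega
    · rw [Fin.succAbove_of_le_castSucc _ _ (by simp [Fin.le_def]; omega),
        Fin.succAbove_of_le_castSucc _ _ (by simp [Fin.le_def]; omega), hs,
        Equiv.swap_apply_of_ne_of_ne]
      · simp only [ne_eq, Fin.ext_iff, Fin.val_succ]; omega
      · simp only [ne_eq, Fin.ext_iff, Fin.val_succ]; omega
  rw [Cm, Cm, ← Equiv.sum_comp (Equiv.mulRight s)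
    (fun σ => (Perm.sign σ : ℤ) • (QuadraticMap.polar Q (v i) (v (σ ⟨k + 1, h⟩)) •
      (((List.ofFn (v ∘ σ)).eraseIdx (k + 1)).map (ι Q)).prod)), ← Finset.sum_neg_distrib]
  refine Finset.sum_congr rfl fun σ _ => ?_
  simp only [Equiv.coe_mulRight]
  have h1 : ((Perm.sign (σ * s) : ℤ)) = -(Perm.sign σ : ℤ) := by
    rw [Perm.sign_mul, hs, Equiv.Perm.sign_swap hne]
    simp
  have h2 : (σ * s) ⟨k + 1, h⟩ = σ ⟨k, hk⟩ := by
    rw [Perm.mul_apply, hs, Equiv.swap_apply_right]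
  have h3 : (List.ofFn (v ∘ (σ * s))).eraseIdx (k + 1) = (List.ofFn (v ∘ σ)).eraseIdx k := by
    rw [eraseIdx_ofFn' (v ∘ (σ * s)) ⟨k + 1, h⟩, eraseIdx_ofFn' (v ∘ σ) ⟨k, hk⟩]
    congr 1
    funext t
    simp only [Function.comp_apply]
    rw [hkey σ t]
  rw [h1, h2, h3, neg_smul]

theorem Cm_pow : ∀ (k : ℕ) (hk : k < m + 1),
    Cm Q v i ⟨k, hk⟩ = ((-1 : ℤ) ^ k) • Cm Q v i ⟨0, Nat.succ_pos m⟩ := by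
  intro k
  induction k with
  | zero => intro hk; simp
  | succ k ih =>
    intro hk
    rw [Cm_alt Q v i k hk, ih (Nat.lt_of_succ_lt hk), pow_succ, ← neg_smul]
    congr 1
    ring

theorem Pm_formula : ∀ (j : ℕ), j ≤ m + 1 →
    Pm Q v i j = ((-1 : ℤ) ^ j) •
      (Pm Q v i 0 - (j : ℤ) • Cm Q v i ⟨0, Nat.succ_pos m⟩) := by
  intro j
  induction j with
  | zero => intro _; simp
  | succ j ih =>
    intro hj
    have hj' : j < m + 1 := hj
    have hstep := Pm_step Q v i ⟨j, hj'⟩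
    have hP : Pm Q v i (j + 1) = Cm Q v i ⟨j, hj'⟩ - Pm Q v i j :=
      eq_sub_of_add_eq' hstep
    rw [hP, Cm_pow Q v i j hj', ih (le_of_lt hj')]
    push_cast
    rw [pow_succ]
    module

end

end Stmt12Aux

open Stmt12Aux CliffordAlgebra in
theorem stmt12 (K V : Type*) [Field K] [CharZero K] [AddCommGroup V] [Module K V]
    (Q : QuadraticForm K V) (n : ℕ) (v : Fin n → V) (i : Fin n) :
    CliffordAlgebra.ι Q (v i) * stdPoly n (fun j => CliffordAlgebra.ι Q (v j)) =
      ((-1 : ℤ) ^ (n - 1)) •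
        (stdPoly n (fun j => CliffordAlgebra.ι Q (v j)) * CliffordAlgebra.ι Q (v i)) := by
  classical
  obtain ⟨m, rfl⟩ : ∃ m, n = m + 1 := ⟨n - 1, (Nat.succ_pred_eq_of_pos i.pos).symm⟩
  set C0 := Cm Q v i ⟨0, Nat.succ_pos m⟩ with hC0
  set p0 := Pm Q v i 0 with hp0
  have hvan : ∑ k : Fin (m + 2), ((-1 : ℤ) ^ (k : ℕ)) • Pm Q v i k = 0 := by
    rw [← decomp Q v i, vanish Q v i]
  have hform := Pm_formula Q v i
  have hvan2 : ∑ k : Fin (m + 2), (p0 - ((k : ℕ) : ℤ) • C0) = 0 := by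
    rw [← hvan]
    refine Finset.sum_congr rfl fun k _ => ?_
    rw [hform k (Nat.lt_succ_iff.mp k.isLt), smul_smul, ← pow_add,
      Even.neg_one_pow ⟨(k : ℕ), rfl⟩, one_smul]
  rw [Finset.sum_sub_distrib, Finset.sum_const, Finset.card_univ, Fintype.card_fin,
    ← Finset.sum_smul, sub_eq_zero] at hvan2
  set S : ℤ := ∑ k : Fin (m + 2), ((k : ℕ) : ℤ) with hS
  have hgauss : 2 * S = ((m + 2 : ℕ) : ℤ) * ((m : ℤ) + 1) := by
    have h1 : (∑ x ∈ Finset.range (m + 2), x) * 2 = (m + 2) * (m + 1) := by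
      simpa using Finset.sum_range_id_mul_two (m + 2)
    have h2 : S = ((∑ x ∈ Finset.range (m + 2), x : ℕ) : ℤ) := by
      rw [hS, Fin.sum_univ_eq_sum_range (fun j => ((j : ℕ) : ℤ)) (m + 2), Nat.cast_sum]
    have h3 := congrArg (fun t : ℕ => (t : ℤ)) h1
    push_cast at h3
    rw [h2]
    push_cast
    linarith
  have hvan3 : ((m + 2 : ℕ) : ℤ) • p0 = S • C0 := by
    rw [natCast_zsmul]; exact hvan2
  have key2 : ((m + 2 : ℕ) : ℤ) • ((2 : ℤ) • p0) = ((m + 2 : ℕ) : ℤ) • (((m : ℤ) + 1) • C0) := by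
    rw [smul_smul, smul_smul, mul_comm (((m + 2 : ℕ) : ℤ)) 2, mul_smul, hvan3, smul_smul,
      hgauss]
  have hcancel : (2 : ℤ) • p0 = ((m : ℤ) + 1) • C0 := by
    set c : K := (((m + 2 : ℕ) : ℤ) : K) with hc
    have hK : ∀ a : CliffordAlgebra Q, ((m + 2 : ℕ) : ℤ) • a = c • a := fun a =>
      (Int.cast_smul_eq_zsmul K _ a).symm
    rw [hK, hK] at key2
    have hne : c ≠ 0 := by
      rw [hc]
      exact_mod_cast (by omega : ((m + 2 : ℕ) : ℤ) ≠ 0)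
    have h4 : c⁻¹ • (c • ((2 : ℤ) • p0)) = c⁻¹ • (c • (((m : ℤ) + 1) • C0)) :=
      congrArg (fun a : CliffordAlgebra Q => c⁻¹ • a) key2
    rwa [inv_smul_smul₀ hne, inv_smul_smul₀ hne] at h4
  have hPn : Pm Q v i (m + 1) = ((-1 : ℤ) ^ (m + 1)) • (- p0) := by
    rw [hform (m + 1) le_rfl]
    congr 1
    push_cast
    rw [← hcancel]
    module
  have hP0 : p0 = ι Q (v i) * stdPoly (m + 1) (fun j => ι Q (v j)) := by
    rw [hp0, stdPoly]; exact Pm_zero Q v i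
  have hPlast : Pm Q v i (m + 1) = stdPoly (m + 1) (fun j => ι Q (v j)) * ι Q (v i) := by
    rw [stdPoly]; exact Pm_last Q v i
  calc ι Q (v i) * stdPoly (m + 1) (fun j => ι Q (v j)) = p0 := hP0.symm
    _ = ((-1 : ℤ) ^ m) • Pm Q v i (m + 1) := by
        rw [hPn, smul_smul, ← pow_add]
        have hodd : Odd (m + (m + 1)) := ⟨m, by ring⟩
        rw [hodd.neg_one_pow]
        simp
    _ = ((-1 : ℤ) ^ ((m + 1) - 1)) •
        (stdPoly (m + 1) (fun j => ι Q (v j)) * ι Q (v i)) := by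
        rw [hPlast]
        norm_num
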